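/- Let ρ be a polynomially bounded positive measure on [0,∞) and define W₂(f ⊗ g) via the Källén–Lehmann representation W₂ = ∫₀^∞ dρ(m₀²) Δ₊^{m₀}. Then W₂ is a well-defined tempered distribution on S(ℝ⁴): for every f ∈ S(ℝ⁴), the map m₀² ↦ ∫_{ℝ³}(d³k/√(k²+m₀²)) f̂(√(k²+m₀²),k) is continuous and bounded by C_M (1+m₀²)^{-M} for every M, so the ρ-integral converges and defines a continuous linear functional on S(ℝ⁴). -/

import Mathlib

open MeasureTheory Filter Topology Set SchwartzMap

/-- The Fourier transform `f̂` of a Schwartz function on `ℝ⁴`. -/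
noncomputable def fourierHat (f : 𝓢(EuclideanSpace ℝ (Fin 4), ℂ)) :
    𝓢(EuclideanSpace ℝ (Fin 4), ℂ) :=
  SchwartzMap.fourierTransformCLM ℝ f

/-- Assemble the 4-vector `(E, p)` from energy `E` and momentum `p ∈ ℝ³`. -/
noncomputable def fourVec (En : ℝ) (p : EuclideanSpace ℝ (Fin 3)) :
    EuclideanSpace ℝ (Fin 4) :=
  (EuclideanSpace.equiv (Fin 4) ℝ).symm (Fin.cons En (fun i => p i))

/-- The momentum-space integral `∫ d³k f̂(√(k²+s),k)/√(k²+s)` of the free two-point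
function `Δ₊^{m₀}` at squared mass `s = m₀²`. -/
noncomputable def deltaPlusPair (f : 𝓢(EuclideanSpace ℝ (Fin 4), ℂ)) (s : ℝ) : ℂ :=
  ∫ k : EuclideanSpace ℝ (Fin 3),
    fourierHat f (fourVec (Real.sqrt (‖k‖ ^ 2 + s)) k) /
      (Real.sqrt (‖k‖ ^ 2 + s) : ℂ)

/-! ### Auxiliary development -/

/-- The `Δ₊`-pairing with an arbitrary Schwartz function `g` (in place of `f̂`). -/
noncomputable def Pmap (g : 𝓢(EuclideanSpace ℝ (Fin 4), ℂ)) (s : ℝ) : ℂ :=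
  ∫ k : EuclideanSpace ℝ (Fin 3),
    g (fourVec (Real.sqrt (‖k‖ ^ 2 + s)) k) /
      (Real.sqrt (‖k‖ ^ 2 + s) : ℂ)

lemma deltaPlusPair_eq_Pmap (f : 𝓢(EuclideanSpace ℝ (Fin 4), ℂ)) :
    deltaPlusPair f = Pmap (fourierHat f) := rfl

lemma fourVec_norm (En : ℝ) (p : EuclideanSpace ℝ (Fin 3)) :
    ‖fourVec En p‖ = Real.sqrt (En ^ 2 + ‖p‖ ^ 2) := by
  rw [EuclideanSpace.norm_eq]
  congr 1
  have hp : ‖p‖ ^ 2 = ∑ i, ‖p i‖ ^ 2 := by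
    rw [EuclideanSpace.norm_eq, Real.sq_sqrt (by positivity)]
  rw [hp, Fin.sum_univ_succ]
  simp [fourVec, Real.norm_eq_abs, sq_abs]

lemma fourVec_cont : Continuous fun q : ℝ × EuclideanSpace ℝ (Fin 3) =>
    fourVec (Real.sqrt (‖q.2‖ ^ 2 + q.1)) q.2 := by
  unfold fourVec
  refine (ContinuousLinearEquiv.continuous _).comp ?_
  refine continuous_pi fun i => ?_
  refine Fin.cases ?_ (fun j => ?_) i
  · simp only [Fin.cons_zero]
    fun_prop
  · simp only [Fin.cons_succ]
    exact (continuous_apply j).comp ((PiLp.continuous_ofLp 2 _).comp continuous_snd)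

/-- The dominating function `‖k‖⁻¹ (1+‖k‖)⁻⁴` on momentum space. -/
noncomputable def domF (k : EuclideanSpace ℝ (Fin 3)) : ℝ :=
  ‖k‖⁻¹ * (((1:ℝ) + ‖k‖) ^ 4)⁻¹

lemma domF_nonneg (k : EuclideanSpace ℝ (Fin 3)) : 0 ≤ domF k := by
  unfold domF; positivity

lemma domF_meas : Measurable domF :=
  measurable_norm.inv.mul ((measurable_norm.const_add 1).pow_const 4).inv

lemma invNorm_intOn_ball :
    IntegrableOn (fun k : EuclideanSpace ℝ (Fin 3) => ‖k‖⁻¹) (Metric.ball 0 1) := by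
  constructor
  · exact measurable_norm.inv.aestronglyMeasurable
  · set A : ℕ → Set (EuclideanSpace ℝ (Fin 3)) :=
      fun n => Metric.ball 0 ((2:ℝ)⁻¹ ^ n) \ Metric.ball 0 ((2:ℝ)⁻¹ ^ (n+1)) with hA
    have hsub : Metric.ball (0 : EuclideanSpace ℝ (Fin 3)) 1 ⊆ {0} ∪ ⋃ n, A n := by
      intro k hk
      rcases eq_or_ne k 0 with h | h
      · exact Or.inl (by simp [h])
      · refine Or.inr ?_
        have hk0 : 0 < ‖k‖ := norm_pos_iff.2 h
        have hex : ∃ n, (2:ℝ)⁻¹ ^ (n+1) ≤ ‖k‖ := by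
          obtain ⟨n, hn⟩ := exists_pow_lt_of_lt_one hk0 (by norm_num : (2:ℝ)⁻¹ < 1)
          exact ⟨n, by
            calc (2:ℝ)⁻¹ ^ (n+1) ≤ (2:ℝ)⁻¹ ^ n := by
                  apply pow_le_pow_of_le_one (by norm_num) (by norm_num) (Nat.le_succ n)
              _ ≤ ‖k‖ := hn.le⟩
        refine mem_iUnion.2 ⟨Nat.find hex, ?_, ?_⟩
        · rw [mem_ball_zero_iff]
          rcases Nat.eq_zero_or_pos (Nat.find hex) with h0 | h0
          · rw [h0, pow_zero]
            exact mem_ball_zero_iff.1 hk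
          · obtain ⟨m, hm⟩ := Nat.exists_eq_succ_of_ne_zero h0.ne'
            have := Nat.find_min hex (m := m) (by omega)
            rw [hm]
            exact lt_of_not_ge this
        · rw [mem_ball_zero_iff, not_lt]
          exact Nat.find_spec hex
    rw [hasFiniteIntegral_def]
    have hnn : ∀ k : EuclideanSpace ℝ (Fin 3), (‖‖k‖⁻¹‖₊ : ENNReal) = ENNReal.ofReal ‖k‖⁻¹ :=
      fun k => Real.enorm_eq_ofReal (by positivity)
    calc ∫⁻ k : EuclideanSpace ℝ (Fin 3) in Metric.ball 0 1, (‖‖k‖⁻¹‖₊ : ENNReal) ∂volume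
        = ∫⁻ k : EuclideanSpace ℝ (Fin 3) in Metric.ball 0 1, ENNReal.ofReal ‖k‖⁻¹ ∂volume := by
          exact lintegral_congr fun k => hnn k
      _ ≤ ∫⁻ k in ({0} ∪ ⋃ n, A n), ENNReal.ofReal ‖k‖⁻¹ ∂volume :=
          lintegral_mono_set hsub
      _ ≤ (∫⁻ k in ({0} : Set (EuclideanSpace ℝ (Fin 3))), ENNReal.ofReal ‖k‖⁻¹ ∂volume)
            + ∫⁻ k in (⋃ n, A n), ENNReal.ofReal ‖k‖⁻¹ ∂volume :=
          lintegral_union_le _ _ _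
      _ ≤ 0 + ∑' n, ∫⁻ k in A n, ENNReal.ofReal ‖k‖⁻¹ ∂volume := by
          gcongr
          · rw [setLIntegral_measure_zero _ _ (measure_singleton 0)]
          · exact lintegral_iUnion_le _ _
      _ ≤ 0 + ∑' n, ENNReal.ofReal (2 * (4:ℝ)⁻¹ ^ n)
            * (volume (Metric.ball (0:EuclideanSpace ℝ (Fin 3)) 1)) := by
          gcongr with n
          have hle : ∫⁻ k in A n, ENNReal.ofReal ‖k‖⁻¹ ∂volume
              ≤ ∫⁻ _ in A n, ENNReal.ofReal ((2:ℝ) ^ (n+1)) ∂volume := by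
            apply setLIntegral_mono measurable_const
            intro k hk
            apply ENNReal.ofReal_le_ofReal
            have h1 : (2:ℝ)⁻¹ ^ (n+1) ≤ ‖k‖ := by
              have := hk.2
              rw [mem_ball_zero_iff, not_lt] at this
              exact this
            have h2 : (0:ℝ) < (2:ℝ)⁻¹ ^ (n+1) := by positivity
            calc ‖k‖⁻¹ ≤ ((2:ℝ)⁻¹ ^ (n+1))⁻¹ := by
                  apply inv_anti₀ h2 h1
              _ = (2:ℝ) ^ (n+1) := by rw [← inv_pow, inv_inv]
          rw [setLIntegral_const] at hle
          refine hle.trans ?_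
          have hvol : volume (A n) ≤ ENNReal.ofReal (((2:ℝ)⁻¹ ^ n) ^ 3)
              * volume (Metric.ball (0:EuclideanSpace ℝ (Fin 3)) 1) := by
            calc volume (A n)
                ≤ volume (Metric.ball (0:EuclideanSpace ℝ (Fin 3)) ((2:ℝ)⁻¹ ^ n)) :=
                  measure_mono diff_subset
              _ = ENNReal.ofReal (((2:ℝ)⁻¹ ^ n) ^ Module.finrank ℝ (EuclideanSpace ℝ (Fin 3)))
                    * volume (Metric.ball (0:EuclideanSpace ℝ (Fin 3)) 1) :=
                  Measure.addHaar_ball volume 0 (by positivity)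
              _ = _ := by rw [finrank_euclideanSpace_fin]
          calc ENNReal.ofReal ((2:ℝ) ^ (n+1)) * volume (A n)
              ≤ ENNReal.ofReal ((2:ℝ) ^ (n+1)) * (ENNReal.ofReal (((2:ℝ)⁻¹ ^ n) ^ 3)
                  * volume (Metric.ball (0:EuclideanSpace ℝ (Fin 3)) 1)) := by gcongr
            _ = ENNReal.ofReal (2 * (4:ℝ)⁻¹ ^ n)
                  * volume (Metric.ball (0:EuclideanSpace ℝ (Fin 3)) 1) := by
                rw [← mul_assoc, ← ENNReal.ofReal_mul (by positivity)]
                congr 2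
                have e1 : (((2:ℝ)⁻¹ ^ n) ^ 3) = (((2:ℝ)⁻¹ ^ 3) ^ n) := by
                  rw [← pow_mul, ← pow_mul, mul_comm]
                rw [e1, pow_succ, mul_comm ((2:ℝ)^n) 2, mul_assoc, ← mul_pow]
                norm_num
      _ < ⊤ := by
          rw [zero_add, ENNReal.tsum_mul_right]
          apply ENNReal.mul_lt_top
          · rw [← ENNReal.ofReal_tsum_of_nonneg (fun n => by positivity)]
            · exact ENNReal.ofReal_lt_top
            · exact (summable_geometric_of_lt_one (by norm_num) (by norm_num)).mul_left 2
          · exact measure_ball_lt_top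

lemma domF_integrable : Integrable domF (volume : Measure (EuclideanSpace ℝ (Fin 3))) := by
  have hrp : ∀ k : EuclideanSpace ℝ (Fin 3),
      ((1:ℝ) + ‖k‖) ^ (-(4:ℝ)) = (((1:ℝ) + ‖k‖) ^ 4)⁻¹ := fun k => by
    rw [show (-(4:ℝ)) = -((4:ℕ):ℝ) by norm_num, Real.rpow_neg (by positivity),
      Real.rpow_natCast]
  rw [← integrableOn_univ, ← Set.union_compl_self (Metric.ball (0:EuclideanSpace ℝ (Fin 3)) 1)]
  apply IntegrableOn.union
  · apply Integrable.mono' invNorm_intOn_ball domF_meas.aestronglyMeasurable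
    filter_upwards with k
    rw [Real.norm_eq_abs, abs_of_nonneg (domF_nonneg k)]
    calc domF k ≤ ‖k‖⁻¹ * 1 := by
          unfold domF
          gcongr
          rw [inv_le_one_iff₀]
          right
          exact one_le_pow₀ (by linarith [norm_nonneg k])
      _ = ‖k‖⁻¹ := mul_one _
  · have hi : Integrable (fun k : EuclideanSpace ℝ (Fin 3) => ((1:ℝ) + ‖k‖) ^ (-(4:ℝ))) := by
      apply integrable_one_add_norm
      rw [finrank_euclideanSpace_fin]
      norm_num
    apply Integrable.mono' hi.integrableOn domF_meas.aestronglyMeasurable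
    rw [ae_restrict_iff' measurableSet_ball.compl]
    filter_upwards with k hk
    have hk1 : (1:ℝ) ≤ ‖k‖ := by
      rw [Set.mem_compl_iff, mem_ball_zero_iff, not_lt] at hk
      exact hk
    rw [Real.norm_eq_abs, abs_of_nonneg (domF_nonneg k), hrp]
    calc domF k ≤ 1 * (((1:ℝ) + ‖k‖) ^ 4)⁻¹ := by
          unfold domF
          gcongr
          rw [inv_le_one_iff₀]; right; exact hk1
      _ = (((1:ℝ) + ‖k‖) ^ 4)⁻¹ := one_mul _

lemma key_bound (g : 𝓢(EuclideanSpace ℝ (Fin 4), ℂ)) (M : ℕ) {s : ℝ} (hs : 0 ≤ s)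
    {k : EuclideanSpace ℝ (Fin 3)} (hk : k ≠ 0) :
    ‖g (fourVec (Real.sqrt (‖k‖ ^ 2 + s)) k) / (Real.sqrt (‖k‖ ^ 2 + s) : ℂ)‖ ≤
      2 ^ (4 + 2*M) * ((Finset.Iic (4 + 2*M, 0)).sup
          (schwartzSeminormFamily ℝ (EuclideanSpace ℝ (Fin 4)) ℂ)) g
        / (1 + s) ^ M * domF k := by
  set S : ℝ := 2 ^ (4 + 2*M) * ((Finset.Iic (4 + 2*M, 0)).sup
      (schwartzSeminormFamily ℝ (EuclideanSpace ℝ (Fin 4)) ℂ)) g with hS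
  have hS0 : 0 ≤ S := by positivity
  set x := fourVec (Real.sqrt (‖k‖ ^ 2 + s)) k with hx
  have hknorm : 0 < ‖k‖ := norm_pos_iff.2 hk
  have hc : ‖k‖ ≤ Real.sqrt (‖k‖ ^ 2 + s) := by
    have := Real.sqrt_le_sqrt (show ‖k‖ ^ 2 ≤ ‖k‖ ^ 2 + s by linarith)
    rwa [Real.sqrt_sq hknorm.le] at this
  have hcpos : 0 < Real.sqrt (‖k‖ ^ 2 + s) := lt_of_lt_of_le hknorm hc
  have hxnorm : ‖x‖ = Real.sqrt (‖k‖ ^ 2 + s + ‖k‖ ^ 2) := by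
    rw [hx, fourVec_norm, Real.sq_sqrt (by positivity)]
  have hx1 : ‖k‖ ≤ ‖x‖ := by
    rw [hxnorm]
    have := Real.sqrt_le_sqrt (show ‖k‖ ^ 2 ≤ ‖k‖ ^ 2 + s + ‖k‖ ^ 2 by nlinarith [sq_nonneg ‖k‖])
    rwa [Real.sqrt_sq hknorm.le] at this
  have hx2 : Real.sqrt s ≤ ‖x‖ := by
    rw [hxnorm]
    exact Real.sqrt_le_sqrt (by nlinarith [sq_nonneg ‖k‖])
  have hsem := SchwartzMap.one_add_le_sup_seminorm_apply (𝕜 := ℝ) (m := (4 + 2*M, 0))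
    le_rfl le_rfl g x
  rw [norm_iteratedFDeriv_zero] at hsem
  have h1 : ‖g x‖ ≤ S * (((1:ℝ) + ‖x‖) ^ (4 + 2*M))⁻¹ := by
    rw [← div_eq_mul_inv, le_div_iff₀ (by positivity)]
    calc ‖g x‖ * (1 + ‖x‖) ^ (4 + 2*M) = (1 + ‖x‖) ^ (4 + 2*M) * ‖g x‖ := by ring
      _ ≤ S := hsem
  have hpow : ((1:ℝ) + ‖k‖) ^ 4 * (1 + s) ^ M ≤ (1 + ‖x‖) ^ (4 + 2*M) := by
    rw [pow_add]
    apply mul_le_mul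
    · exact pow_le_pow_left₀ (by positivity) (by linarith) 4
    · rw [pow_mul]
      apply pow_le_pow_left₀ (by positivity) ?_ M
      have h2 : 1 + s ≤ (1 + Real.sqrt s) ^ 2 := by
        nlinarith [Real.sq_sqrt hs, Real.sqrt_nonneg s]
      refine h2.trans ?_
      exact pow_le_pow_left₀ (by positivity) (by linarith) 2
    · positivity
    · positivity
  have hdiv : ‖g x / (Real.sqrt (‖k‖ ^ 2 + s) : ℂ)‖
      = ‖g x‖ * (Real.sqrt (‖k‖ ^ 2 + s))⁻¹ := by
    rw [norm_div, Complex.norm_real, Real.norm_eq_abs, abs_of_nonneg (Real.sqrt_nonneg _),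
      div_eq_mul_inv]
  rw [hdiv]
  calc ‖g x‖ * (Real.sqrt (‖k‖ ^ 2 + s))⁻¹
      ≤ (S * (((1:ℝ) + ‖x‖) ^ (4 + 2*M))⁻¹) * ‖k‖⁻¹ := by
        apply mul_le_mul h1 (inv_anti₀ hknorm hc) (by positivity) (by positivity)
    _ ≤ (S * (((1:ℝ) + ‖k‖) ^ 4 * (1 + s) ^ M)⁻¹) * ‖k‖⁻¹ := by
        have := inv_anti₀ (show (0:ℝ) < (1 + ‖k‖) ^ 4 * (1 + s) ^ M by positivity) hpow
        exact mul_le_mul_of_nonneg_right (mul_le_mul_of_nonneg_left this hS0) (by positivity)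
    _ = S / (1 + s) ^ M * domF k := by
        rw [mul_inv, div_eq_mul_inv, domF]
        ring

lemma ae_ne_zero : ∀ᵐ k : EuclideanSpace ℝ (Fin 3) ∂volume, k ≠ 0 := by
  have h : (volume : Measure (EuclideanSpace ℝ (Fin 3))) {0} = 0 := measure_singleton 0
  rw [ae_iff]
  have he : {k : EuclideanSpace ℝ (Fin 3) | ¬ k ≠ 0} = {0} := by ext k; simp
  rw [he]
  exact h

lemma integrand_meas (g : 𝓢(EuclideanSpace ℝ (Fin 4), ℂ)) (s : ℝ) :
    AEStronglyMeasurable (fun k : EuclideanSpace ℝ (Fin 3) =>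
      g (fourVec (Real.sqrt (‖k‖ ^ 2 + s)) k) / (Real.sqrt (‖k‖ ^ 2 + s) : ℂ)) volume := by
  apply Measurable.aestronglyMeasurable
  have h1 : Measurable fun k : EuclideanSpace ℝ (Fin 3) =>
      g (fourVec (Real.sqrt (‖k‖ ^ 2 + s)) k) :=
    ((g.continuous.comp fourVec_cont).comp
      (continuous_const.prodMk continuous_id)).measurable
  have h2 : Measurable fun k : EuclideanSpace ℝ (Fin 3) =>
      ((Real.sqrt (‖k‖ ^ 2 + s) : ℝ) : ℂ) :=
    Complex.measurable_ofReal.comp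
      (Real.continuous_sqrt.comp ((continuous_norm.pow 2).add continuous_const)).measurable
  exact h1.div h2

lemma integrand_integrable (g : 𝓢(EuclideanSpace ℝ (Fin 4), ℂ)) {s : ℝ} (hs : 0 ≤ s) :
    Integrable (fun k : EuclideanSpace ℝ (Fin 3) =>
      g (fourVec (Real.sqrt (‖k‖ ^ 2 + s)) k) / (Real.sqrt (‖k‖ ^ 2 + s) : ℂ)) volume := by
  apply Integrable.mono'
    (domF_integrable.const_mul (2 ^ (4 + 2*0) * ((Finset.Iic (4 + 2*0, 0)).sup
      (schwartzSeminormFamily ℝ (EuclideanSpace ℝ (Fin 4)) ℂ)) g / (1 + s) ^ 0))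
    (integrand_meas g s)
  filter_upwards [ae_ne_zero] with k hk
  exact key_bound g 0 hs hk

lemma Pmap_norm_le (g : 𝓢(EuclideanSpace ℝ (Fin 4), ℂ)) (M : ℕ) {s : ℝ} (hs : 0 ≤ s) :
    ‖Pmap g s‖ ≤ 2 ^ (4 + 2*M) * ((Finset.Iic (4 + 2*M, 0)).sup
        (schwartzSeminormFamily ℝ (EuclideanSpace ℝ (Fin 4)) ℂ)) g
      * (∫ k : EuclideanSpace ℝ (Fin 3), domF k) / (1 + s) ^ M := by
  set S : ℝ := 2 ^ (4 + 2*M) * ((Finset.Iic (4 + 2*M, 0)).sup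
      (schwartzSeminormFamily ℝ (EuclideanSpace ℝ (Fin 4)) ℂ)) g with hS
  have h := norm_integral_le_of_norm_le (μ := (volume : Measure (EuclideanSpace ℝ (Fin 3))))
    (f := fun k : EuclideanSpace ℝ (Fin 3) =>
      g (fourVec (Real.sqrt (‖k‖ ^ 2 + s)) k) / (Real.sqrt (‖k‖ ^ 2 + s) : ℂ))
    (domF_integrable.const_mul (S / (1 + s) ^ M)) ?_
  · refine h.trans ?_
    rw [integral_const_mul, div_mul_eq_mul_div]
  · filter_upwards [ae_ne_zero] with k hk
    exact key_bound g M hs hk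

lemma Pmap_contOn (g : 𝓢(EuclideanSpace ℝ (Fin 4), ℂ)) :
    ContinuousOn (Pmap g) (Ici 0) := by
  intro s₀ hs₀
  unfold Pmap
  apply continuousWithinAt_of_dominated (bound := fun k =>
    2 ^ (4 + 2*0) * ((Finset.Iic (4 + 2*0, 0)).sup
      (schwartzSeminormFamily ℝ (EuclideanSpace ℝ (Fin 4)) ℂ)) g / (1 + (0:ℝ)) ^ 0 * domF k)
  · exact Eventually.of_forall fun s => integrand_meas g s
  · filter_upwards [eventually_mem_nhdsWithin] with s hsmem
    filter_upwards [ae_ne_zero] with k hk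
    have h := key_bound g 0 hsmem hk
    simpa using h
  · exact domF_integrable.const_mul _
  · filter_upwards [ae_ne_zero] with k hk
    apply ContinuousAt.continuousWithinAt
    apply ContinuousAt.div
    · exact ((g.continuous.comp fourVec_cont).comp
        (continuous_id.prodMk continuous_const)).continuousAt
    · exact (Complex.continuous_ofReal.comp
        (Real.continuous_sqrt.comp (continuous_const.add continuous_id))).continuousAt
    · have hpos : 0 < ‖k‖ ^ 2 + s₀ := by
        have : 0 < ‖k‖ := norm_pos_iff.2 hk
        have hs0 : (0:ℝ) ≤ s₀ := hs₀
        positivity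
      simp only [Ne, Complex.ofReal_eq_zero]
      exact (Real.sqrt_pos.2 hpos).ne'

lemma rho_int_aux (ρ : Measure ℝ) (C : ℝ) (N : ℕ) (hC : 0 ≤ C)
    (hpoly : ∀ L : ℝ, 0 ≤ L → ρ (Icc 0 L) ≤ ENNReal.ofReal (C * (1 + L ^ N))) :
    IntegrableOn (fun s : ℝ => (((1:ℝ) + s) ^ (N + 2))⁻¹) (Ici 0) ρ := by
  constructor
  · exact ((measurable_const.add measurable_id').pow_const _).inv.aestronglyMeasurable
  · rw [hasFiniteIntegral_def]
    have hcover : Ici (0:ℝ) ⊆ ⋃ n : ℕ, Ico (n:ℝ) ((n:ℝ) + 1) := by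
      intro s hs
      exact mem_iUnion.2 ⟨⌊s⌋₊, ⟨Nat.floor_le hs, Nat.lt_floor_add_one s⟩⟩
    calc ∫⁻ s in Ici (0:ℝ), (‖(((1:ℝ) + s) ^ (N + 2))⁻¹‖₊ : ENNReal) ∂ρ
        ≤ ∫⁻ s in (⋃ n : ℕ, Ico (n:ℝ) ((n:ℝ) + 1)),
            (‖(((1:ℝ) + s) ^ (N + 2))⁻¹‖₊ : ENNReal) ∂ρ :=
          lintegral_mono_set hcover
      _ ≤ ∑' n : ℕ, ∫⁻ s in Ico (n:ℝ) ((n:ℝ) + 1),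
            (‖(((1:ℝ) + s) ^ (N + 2))⁻¹‖₊ : ENNReal) ∂ρ :=
          lintegral_iUnion_le _ _
      _ ≤ ∑' n : ℕ, ENNReal.ofReal (2 * C * (((1:ℝ) + n) ^ 2)⁻¹) := by
          gcongr with n
          have hb1 : (1:ℝ) ≤ 1 + (n:ℝ) := by
            have : (0:ℝ) ≤ n := Nat.cast_nonneg n
            linarith
          have step1 : ∫⁻ s in Ico (n:ℝ) ((n:ℝ) + 1),
              (‖(((1:ℝ) + s) ^ (N + 2))⁻¹‖₊ : ENNReal) ∂ρ
              ≤ ∫⁻ _ in Ico (n:ℝ) ((n:ℝ) + 1),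
                  ENNReal.ofReal ((((1:ℝ) + n) ^ (N + 2))⁻¹) ∂ρ := by
            apply setLIntegral_mono measurable_const
            intro s hs
            have hs0 : (n:ℝ) ≤ s := hs.1
            have hsp : (0:ℝ) ≤ s := le_trans (Nat.cast_nonneg n) hs0
            rw [← enorm_eq_nnnorm, Real.enorm_eq_ofReal (by positivity)]
            apply ENNReal.ofReal_le_ofReal
            apply inv_anti₀ (by positivity)
            exact pow_le_pow_left₀ (by linarith) (by linarith) _
          rw [setLIntegral_const] at step1
          refine step1.trans ?_
          have hmeas : ρ (Ico (n:ℝ) ((n:ℝ) + 1)) ≤ ENNReal.ofReal (C * (1 + ((n:ℝ) + 1) ^ N)) := by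
            refine le_trans (measure_mono ?_) (hpoly ((n:ℝ) + 1) (by positivity))
            intro s hs
            exact ⟨le_trans (Nat.cast_nonneg n) hs.1, hs.2.le⟩
          calc ENNReal.ofReal ((((1:ℝ) + n) ^ (N + 2))⁻¹) * ρ (Ico (n:ℝ) ((n:ℝ) + 1))
              ≤ ENNReal.ofReal ((((1:ℝ) + n) ^ (N + 2))⁻¹)
                  * ENNReal.ofReal (C * (1 + ((n:ℝ) + 1) ^ N)) := by gcongr
            _ = ENNReal.ofReal ((((1:ℝ) + n) ^ (N + 2))⁻¹ * (C * (1 + ((n:ℝ) + 1) ^ N))) := by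
                rw [← ENNReal.ofReal_mul (by positivity)]
            _ ≤ ENNReal.ofReal (2 * C * (((1:ℝ) + n) ^ 2)⁻¹) := by
                apply ENNReal.ofReal_le_ofReal
                have hb : ((n:ℝ) + 1) = 1 + (n:ℝ) := by ring
                rw [hb]
                set b : ℝ := 1 + (n:ℝ) with hbdef
                have hb0 : (0:ℝ) < b := by linarith
                have hbN : (1:ℝ) ≤ b ^ N := one_le_pow₀ hb1
                have hfrac : b ^ N / b ^ (N + 2) = (b ^ 2)⁻¹ := by
                  rw [pow_add]
                  field_simp
                calc (b ^ (N + 2))⁻¹ * (C * (1 + b ^ N))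
                    ≤ (b ^ (N + 2))⁻¹ * (C * (2 * b ^ N)) := by
                      gcongr
                      linarith
                  _ = 2 * C * (b ^ N / b ^ (N + 2)) := by ring
                  _ = 2 * C * (b ^ 2)⁻¹ := by rw [hfrac]
      _ < ⊤ := by
          have hsum0 : Summable (fun n : ℕ => (((1:ℝ) + n) ^ 2)⁻¹) := by
            have h1 : Summable (fun n : ℕ => 1 / ((n + 1 : ℕ):ℝ) ^ 2) :=
              (summable_nat_add_iff (f := fun n : ℕ => 1 / (n:ℝ) ^ 2) 1).2
                (Real.summable_one_div_nat_pow.2 one_lt_two)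
            apply h1.congr
            intro n
            push_cast
            rw [one_div]
            ring_nf
          have hsum : Summable (fun n : ℕ => 2 * C * (((1:ℝ) + n) ^ 2)⁻¹) :=
            hsum0.mul_left (2 * C)
          rw [← ENNReal.ofReal_tsum_of_nonneg (fun n => by positivity) hsum]
          exact ENNReal.ofReal_lt_top

theorem kallen_lehmann_well_defined
    (ρ : Measure ℝ) (hsupp : ρ (Iio 0) = 0)
    (C : ℝ) (N : ℕ) (hC : 0 ≤ C)
    (hpoly : ∀ L : ℝ, 0 ≤ L → ρ (Icc 0 L) ≤ ENNReal.ofReal (C * (1 + L ^ N))) :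
    (∀ f : 𝓢(EuclideanSpace ℝ (Fin 4), ℂ),
      ContinuousOn (deltaPlusPair f) (Ici 0)) ∧
    (∀ f : 𝓢(EuclideanSpace ℝ (Fin 4), ℂ), ∀ M : ℕ, ∃ CM : ℝ, 0 ≤ CM ∧
      ∀ s ∈ Ici (0 : ℝ), ‖deltaPlusPair f s‖ ≤ CM / (1 + s) ^ M) ∧
    (∀ f : 𝓢(EuclideanSpace ℝ (Fin 4), ℂ),
      IntegrableOn (deltaPlusPair f) (Ici 0) ρ) ∧
    (∃ W : 𝓢(EuclideanSpace ℝ (Fin 4), ℂ) →L[ℝ] ℂ,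
      ∀ f, W f = ∫ s in Ici (0 : ℝ), deltaPlusPair f s ∂ρ) := by
  have hIdom : (0:ℝ) ≤ ∫ k : EuclideanSpace ℝ (Fin 3), domF k :=
    integral_nonneg domF_nonneg
  -- integrability of `Pmap g` over `ρ` for every `g`
  have hIntOn : ∀ g : 𝓢(EuclideanSpace ℝ (Fin 4), ℂ), IntegrableOn (Pmap g) (Ici 0) ρ := by
    intro g
    set S : ℝ := 2 ^ (4 + 2*(N+2)) * ((Finset.Iic (4 + 2*(N+2), 0)).sup
        (schwartzSeminormFamily ℝ (EuclideanSpace ℝ (Fin 4)) ℂ)) g with hSdef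
    have hS0 : 0 ≤ S := by positivity
    apply Integrable.mono'
      ((rho_int_aux ρ C N hC hpoly).const_mul (S * (∫ k : EuclideanSpace ℝ (Fin 3), domF k)))
      ((Pmap_contOn g).aestronglyMeasurable measurableSet_Ici)
    rw [ae_restrict_iff' measurableSet_Ici]
    filter_upwards with s hs
    have h := Pmap_norm_le g (N+2) hs
    rw [div_eq_mul_inv] at h
    exact h
  refine ⟨fun f => Pmap_contOn (fourierHat f), ?_, fun f => hIntOn (fourierHat f), ?_⟩
  · -- decay
    intro f M
    refine ⟨2 ^ (4 + 2*M) * ((Finset.Iic (4 + 2*M, 0)).sup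
        (schwartzSeminormFamily ℝ (EuclideanSpace ℝ (Fin 4)) ℂ)) (fourierHat f)
      * (∫ k : EuclideanSpace ℝ (Fin 3), domF k), by positivity, ?_⟩
    intro s hs
    exact Pmap_norm_le (fourierHat f) M hs
  · -- the tempered distribution
    set Irho : ℝ := ∫ s in Ici (0:ℝ), (((1:ℝ) + s) ^ (N + 2))⁻¹ ∂ρ with hIrho
    have hIrho0 : 0 ≤ Irho := by
      apply setIntegral_nonneg measurableSet_Ici
      intro s hs
      have : (0:ℝ) ≤ s := hs
      positivity
    refine ⟨(SchwartzMap.mkCLMtoNormedSpace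
      (fun g : 𝓢(EuclideanSpace ℝ (Fin 4), ℂ) => ∫ s in Ici (0:ℝ), Pmap g s ∂ρ)
      ?_ ?_ ?_).comp (SchwartzMap.fourierTransformCLM ℝ), fun f => rfl⟩
    · -- additivity
      intro g h
      have hadd : ∀ s ∈ Ici (0:ℝ), Pmap (g + h) s = Pmap g s + Pmap h s := by
        intro s hs
        unfold Pmap
        rw [← integral_add (integrand_integrable g hs) (integrand_integrable h hs)]
        congr 1
        ext k
        rw [SchwartzMap.add_apply, add_div]
      show (∫ s in Ici (0:ℝ), Pmap (g + h) s ∂ρ)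
          = (∫ s in Ici (0:ℝ), Pmap g s ∂ρ) + ∫ s in Ici (0:ℝ), Pmap h s ∂ρ
      rw [setIntegral_congr_fun measurableSet_Ici hadd]
      exact integral_add (hIntOn g) (hIntOn h)
    · -- homogeneity
      intro a g
      have hsmul : ∀ s : ℝ, Pmap (a • g) s = a • Pmap g s := by
        intro s
        unfold Pmap
        rw [← integral_smul]
        congr 1
        ext k
        rw [SchwartzMap.smul_apply, smul_div_assoc]
      show (∫ s in Ici (0:ℝ), Pmap (a • g) s ∂ρ)
          = (RingHom.id ℝ) a • ∫ s in Ici (0:ℝ), Pmap g s ∂ρ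
      simp only [hsmul, RingHom.id_apply]
      exact integral_smul a _
    · -- the seminorm bound
      refine ⟨Finset.Iic (4 + 2*(N+2), 0),
        2 ^ (4 + 2*(N+2)) * (∫ k : EuclideanSpace ℝ (Fin 3), domF k) * Irho,
        by positivity, ?_⟩
      intro g
      set S : ℝ := 2 ^ (4 + 2*(N+2)) * ((Finset.Iic (4 + 2*(N+2), 0)).sup
          (schwartzSeminormFamily ℝ (EuclideanSpace ℝ (Fin 4)) ℂ)) g with hSdef
      have hS0 : 0 ≤ S := by positivity
      have hb := norm_integral_le_of_norm_le (μ := ρ.restrict (Ici 0))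
        (f := fun s => Pmap g s)
        ((rho_int_aux ρ C N hC hpoly).const_mul
          (S * (∫ k : EuclideanSpace ℝ (Fin 3), domF k))) ?_
      · refine hb.trans ?_
        rw [integral_const_mul]
        refine le_of_eq ?_
        rw [hSdef]
        ring
      · rw [ae_restrict_iff' measurableSet_Ici]
        filter_upwards with s hs
        have h := Pmap_norm_le g (N+2) hs
        rw [div_eq_mul_inv] at h
        exact h
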